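/- Under the hypotheses of the abstract convexity lemma, with D(t) = ⟨Sf,f⟩, one has Ḋ(t) ≥ ⟨S_t f + [S,A]f, f⟩ - (1/2)‖∂ₜf - Af - Sf‖², where [S,A] = SA - AS and S_t is the time derivative of S. -/

import Mathlib

/-- With `S(t)` symmetric, `A(t)` skew-symmetric, `f` a differentiable curve and
`D(t) = ⟨S(t)f(t), f(t)⟩`, one has
`Ḋ ≥ ⟨S_t f + [S,A]f, f⟩ - (1/2)‖∂ₜf - Af - Sf‖²`. -/
theorem stmt8 (E : Type*) [NormedAddCommGroup E] [InnerProductSpace ℂ E]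
    (S A S' : ℝ → E →ₗ[ℂ] E) (f f' : ℝ → E)
    (hS : ∀ t (g h : E), (inner ℂ (S t g) h : ℂ) = inner ℂ g (S t h))
    (hA : ∀ t (g h : E), (inner ℂ (A t g) h : ℂ) = -inner ℂ g (A t h))
    (hS' : ∀ t (g h : E), (inner ℂ (S' t g) h : ℂ) = inner ℂ g (S' t h))
    (hf : ∀ t, HasDerivAt f (f' t) t)
    (hSf : ∀ t, HasDerivAt (fun τ => S τ (f τ)) (S' t (f t) + S t (f' t)) t) :
    ∀ t : ℝ, deriv (fun τ => (inner ℂ (S τ (f τ)) (f τ) : ℂ).re) t ≥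
      (inner ℂ (S' t (f t) + (S t (A t (f t)) - A t (S t (f t)))) (f t) : ℂ).re -
        (1 / 2) * ‖f' t - A t (f t) - S t (f t)‖ ^ 2 := by
  intro t
  have hD : HasDerivAt (fun τ => (inner ℂ (S τ (f τ)) (f τ) : ℂ))
      (inner ℂ (S t (f t)) (f' t) + inner ℂ (S' t (f t) + S t (f' t)) (f t)) t :=
    HasDerivAt.inner ℂ (hSf t) (hf t)
  have hDre : HasDerivAt (fun τ => (inner ℂ (S τ (f τ)) (f τ) : ℂ).re)
      ((inner ℂ (S t (f t)) (f' t) + inner ℂ (S' t (f t) + S t (f' t)) (f t) : ℂ).re) t :=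
    Complex.reCLM.hasFDerivAt.comp_hasDerivAt t hD
  rw [hDre.deriv]
  set u := f t with hu
  set v := f' t with hv
  set w := v - A t u - S t u with hw
  have hv' : v = w + A t u + S t u := by rw [hw]; abel
  -- real parts
  have key1 : (inner ℂ (S t u) v : ℂ).re = (inner ℂ (S t v) u : ℂ).re := by
    rw [hS t u v]
    exact inner_re_symm (𝕜 := ℂ) u (S t v)
  have hSv : S t v = S t w + S t (A t u) + S t (S t u) := by
    rw [hv']; simp
  have key2 : (inner ℂ (A t (S t u)) u : ℂ).re = -(inner ℂ (S t (A t u)) u : ℂ).re := by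
    have h1 : (inner ℂ (A t (S t u)) u : ℂ) = -inner ℂ (S t u) (A t u) := hA t (S t u) u
    have h2 : (inner ℂ (S t (A t u)) u : ℂ) = inner ℂ (A t u) (S t u) := hS t (A t u) u
    rw [h1, h2]
    simp only [Complex.neg_re, neg_inj]
    exact inner_re_symm (𝕜 := ℂ) (S t u) (A t u)
  have key3 : (inner ℂ (S t w) u : ℂ).re = (inner ℂ w (S t u) : ℂ).re := by
    rw [hS t w u]
  have key4 : (inner ℂ (S t (S t u)) u : ℂ).re = ‖S t u‖ ^ 2 := by
    rw [hS t (S t u) u]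
    exact inner_self_eq_norm_sq (𝕜 := ℂ) (S t u)
  have hnn : (0:ℝ) ≤ (1/2) * ‖w + (2:ℂ) • (S t u)‖ ^ 2 := by positivity
  have hexp : ‖w + (2:ℂ) • (S t u)‖ ^ 2
      = ‖w‖ ^ 2 + 4 * (inner ℂ w (S t u) : ℂ).re + 4 * ‖S t u‖ ^ 2 := by
    rw [@norm_add_sq ℂ]
    rw [inner_smul_right]
    simp [norm_smul]
    ring
  have goal2 : (inner ℂ (S t (f t)) (f' t) + inner ℂ (S' t (f t) + S t (f' t)) (f t) : ℂ).re
      = (inner ℂ (S' t u) u : ℂ).re + 2 * (inner ℂ (S t v) u : ℂ).re := by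
    simp [inner_add_left, key1, ← hu, ← hv]
    ring
  have goalR : (inner ℂ (S' t (f t) + (S t (A t (f t)) - A t (S t (f t)))) (f t) : ℂ).re
      = (inner ℂ (S' t u) u : ℂ).re + 2 * (inner ℂ (S t (A t u)) u : ℂ).re := by
    simp [inner_add_left, inner_sub_left, key2, ← hu]
    ring
  rw [goal2, goalR]
  have hSvre : (inner ℂ (S t v) u : ℂ).re
      = (inner ℂ w (S t u) : ℂ).re + (inner ℂ (S t (A t u)) u : ℂ).re + ‖S t u‖ ^ 2 := by
    rw [hSv]; simp [inner_add_left, key3, key4]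
  rw [hSvre]
  nlinarith [hnn, hexp]
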